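/- Let Λ be a commutative ring, V a finite free Λ-module with dual V*. Suppose M is a Λ-module with actions of the exterior algebras Λ^*(V) and Λ^*(V*) which are compatible in the sense that v·v*·m + v*·v·m = ⟨v, v*⟩·m for all v ∈ V, v* ∈ V*, m ∈ M (i.e. M is a module over the Clifford/Weyl-type algebra generated by V and V* with these relations). If M is free of rank one over Λ^*(V*) generated by an element m₀ annihilated by V (i.e. v·m₀ = 0 for all v ∈ V), then M is also free of rank one over Λ^*(V), generated by the element (v*₁∧…∧v*_δ)·m₀ for any basis v*₁,…,v*_δ of V*. -/

import Mathlib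

noncomputable section

open ExteriorAlgebra

namespace SpectralHeckeAux

variable {Λ : Type} [CommRing Λ]
variable {W : Type} [AddCommGroup W] [Module Λ W] {δ : ℕ}

/-- Monomial in the exterior algebra attached to a list of module elements. -/
def mon (l : List W) : ExteriorAlgebra Λ W := (l.map (ι Λ)).prod

@[simp] lemma mon_nil : mon ([] : List W) = (1 : ExteriorAlgebra Λ W) := rfl

@[simp] lemma mon_cons (w : W) (l : List W) :
    mon (Λ := Λ) (w :: l) = ι Λ w * mon l := by
  simp [mon]

lemma mon_append (l l' : List W) :
    mon (Λ := Λ) (l ++ l') = mon l * mon l' := by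
  simp [mon]

lemma span_mon :
    Submodule.span Λ (Set.range (mon : List W → ExteriorAlgebra Λ W)) = ⊤ := by
  rw [eq_top_iff]
  rintro x -
  induction x using ExteriorAlgebra.induction with
  | algebraMap r =>
      have h : algebraMap Λ (ExteriorAlgebra Λ W) r = r • mon [] := by
        simp [Algebra.smul_def]
      rw [h]
      exact Submodule.smul_mem _ _ (Submodule.subset_span ⟨[], rfl⟩)
  | ι w => exact Submodule.subset_span ⟨[w], by simp⟩
  | mul a b ha hb =>
      have h := Submodule.mul_mem_mul ha hb
      rw [Submodule.span_mul_span] at h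
      refine Submodule.span_le.mpr ?_ h
      intro x hx
      rw [Set.mem_mul] at hx
      obtain ⟨x1, ⟨l, rfl⟩, x2, ⟨l', rfl⟩, rfl⟩ := hx
      exact Submodule.subset_span ⟨l ++ l', mon_append l l'⟩
  | add a b ha hb => exact Submodule.add_mem _ ha hb


/-- The canonical (sorted) list of elements of a finset of `Fin δ`. -/
def cList (S : Finset (Fin δ)) : List (Fin δ) := (List.finRange δ).filter (· ∈ S)

@[simp] lemma mem_cList {S : Finset (Fin δ)} {i : Fin δ} : i ∈ cList S ↔ i ∈ S := by
  simp [cList]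

lemma nodup_cList (S : Finset (Fin δ)) : (cList S).Nodup :=
  (List.nodup_finRange δ).filter _

@[simp] lemma cList_empty : cList (∅ : Finset (Fin δ)) = [] := by
  simp [cList]

lemma toFinset_cList (S : Finset (Fin δ)) : (cList S).toFinset = S := by
  ext i; simp

/-- Canonical monomial attached to a finset. -/
def cMon (β : Fin δ → W) (S : Finset (Fin δ)) : ExteriorAlgebra Λ W :=
  mon ((cList S).map β)

lemma ι_mul_mon_of_mem (β : Fin δ → W) {j : Fin δ} :
    ∀ {l : List (Fin δ)}, j ∈ l → ι Λ (β j) * mon (l.map β) = 0 := by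
  intro l
  induction l with
  | nil => simp
  | cons a l ih =>
      intro hj
      rcases eq_or_ne j a with rfl | hne
      · rw [List.map_cons, mon_cons, ← mul_assoc, ι_sq_zero, zero_mul]
      · have hj' : j ∈ l := by
          rcases List.mem_cons.mp hj with h | h
          · exact absurd h hne
          · exact h
        have hswap : ι Λ (β j) * ι Λ (β a) = -(ι Λ (β a) * ι Λ (β j)) :=
          eq_neg_of_add_eq_zero_left (ι_add_mul_swap _ _)
        rw [List.map_cons, mon_cons, ← mul_assoc, hswap, neg_mul, mul_assoc,
          ih hj', mul_zero, neg_zero]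

lemma ι_mul_filter (β : Fin δ → W) (j : Fin δ) (S : Finset (Fin δ)) :
    ∀ (u : List (Fin δ)), u.Nodup → j ∈ u → j ∉ S →
    ∃ k : ℕ, ι Λ (β j) * mon ((u.filter (· ∈ S)).map β)
      = ((-1 : Λ))^k • mon ((u.filter (· ∈ insert j S)).map β) := by
  intro u
  induction u with
  | nil => intro _ h; simp at h
  | cons a u ih =>
      intro hnd hju hjS
      have hnd' : u.Nodup := hnd.of_cons
      have hau : a ∉ u := (List.nodup_cons.mp hnd).1
      rcases eq_or_ne a j with rfl | hne
      · -- head is j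
        refine ⟨0, ?_⟩
        have h1 : (a :: u).filter (· ∈ S) = u.filter (· ∈ S) := by
          rw [List.filter_cons]
          simp [hjS]
        have h2 : (a :: u).filter (· ∈ insert a S) = a :: u.filter (· ∈ S) := by
          rw [List.filter_cons, if_pos (by simp)]
          congr 1
          apply List.filter_congr
          intro x hx
          have hxa : x ≠ a := fun h => hau (h ▸ hx)
          simp [Finset.mem_insert, hxa]
        rw [h1, h2, List.map_cons, mon_cons, pow_zero, one_smul]
      · have hju' : j ∈ u := by
          rcases List.mem_cons.mp hju with h | h
          · exact absurd h.symm hne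
          · exact h
        obtain ⟨k, hk⟩ := ih hnd' hju' hjS
        by_cases haS : a ∈ S
        · refine ⟨k + 1, ?_⟩
          have h1 : (a :: u).filter (· ∈ S) = a :: u.filter (· ∈ S) := by
            rw [List.filter_cons]; simp [haS]
          have h2 : (a :: u).filter (· ∈ insert j S) = a :: u.filter (· ∈ insert j S) := by
            rw [List.filter_cons]; simp [Finset.mem_insert, haS]
          have hswap : ι Λ (β j) * ι Λ (β a) = -(ι Λ (β a) * ι Λ (β j)) :=
            eq_neg_of_add_eq_zero_left (ι_add_mul_swap _ _)
          rw [h1, h2, List.map_cons, mon_cons, ← mul_assoc, hswap, neg_mul, mul_assoc, hk,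
            List.map_cons, mon_cons, mul_smul_comm, ← neg_smul]
          rw [pow_succ, mul_comm ((-1 : Λ)^k) (-1 : Λ), neg_one_mul]
        · refine ⟨k, ?_⟩
          have h1 : (a :: u).filter (· ∈ S) = u.filter (· ∈ S) := by
            rw [List.filter_cons]; simp [haS]
          have h2 : (a :: u).filter (· ∈ insert j S) = u.filter (· ∈ insert j S) := by
            rw [List.filter_cons]; simp [Finset.mem_insert, haS, hne]
          rw [h1, h2, hk]

lemma ι_mul_cMon_mem (β : Fin δ → W) (j : Fin δ) (S : Finset (Fin δ)) :
    ι Λ (β j) * cMon β S ∈ Submodule.span Λ (Set.range (cMon β)) := by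
  by_cases hj : j ∈ S
  · rw [cMon, ι_mul_mon_of_mem β (mem_cList.mpr hj)]
    exact Submodule.zero_mem _
  · obtain ⟨k, hk⟩ := ι_mul_filter (Λ := Λ) β j S (List.finRange δ) (List.nodup_finRange δ)
      (List.mem_finRange j) hj
    rw [cMon, cList, hk]
    exact Submodule.smul_mem _ _ (Submodule.subset_span ⟨insert j S, rfl⟩)

lemma mul_mem_span_cMon (β : Fin δ → W) {y : ExteriorAlgebra Λ W}
    (hw : y ∈ Submodule.span Λ (Set.range fun j => (ι Λ (β j) : ExteriorAlgebra Λ W)))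
    {x : ExteriorAlgebra Λ W} (hx : x ∈ Submodule.span Λ (Set.range (cMon β))) :
    y * x ∈ Submodule.span Λ (Set.range (cMon β)) := by
  induction hw using Submodule.span_induction with
  | mem y hy =>
      obtain ⟨j, rfl⟩ := hy
      induction hx using Submodule.span_induction with
      | mem z hz => obtain ⟨S, rfl⟩ := hz; exact ι_mul_cMon_mem β j S
      | zero => rw [mul_zero]; exact Submodule.zero_mem _
      | add a b _ _ ha hb => rw [mul_add]; exact Submodule.add_mem _ ha hb
      | smul r a _ ha => rw [mul_smul_comm]; exact Submodule.smul_mem _ _ ha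
  | zero => rw [zero_mul]; exact Submodule.zero_mem _
  | add a b _ _ ha hb => rw [add_mul]; exact Submodule.add_mem _ ha hb
  | smul r a _ ha => rw [smul_mul_assoc]; exact Submodule.smul_mem _ _ ha

lemma span_cMon (β : Module.Basis (Fin δ) Λ W) :
    Submodule.span Λ (Set.range (cMon (Λ := Λ) (β : Fin δ → W))) = ⊤ := by
  rw [eq_top_iff, ← span_mon, Submodule.span_le]
  rintro _ ⟨l, rfl⟩
  induction l with
  | nil =>
      exact Submodule.subset_span ⟨∅, by simp [cMon]⟩
  | cons w l ih =>
      rw [mon_cons]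
      refine mul_mem_span_cMon β ?_ ih
      have hw : (ι Λ w : ExteriorAlgebra Λ W) = ∑ j, β.repr w j • ι Λ (β j) := by
        conv_lhs => rw [← β.sum_repr w]
        rw [map_sum]
        simp
      rw [hw]
      exact Submodule.sum_mem _ fun j _ =>
        Submodule.smul_mem _ _ (Submodule.subset_span ⟨j, rfl⟩)


section Contraction

open CliffordAlgebra

variable (γ : Fin δ → Module.Dual Λ W)

lemma contract_mon_of_not_mem (β : Fin δ → W)
    (hγβ : ∀ i j, γ i (β j) = if i = j then 1 else 0) {i : Fin δ} :
    ∀ {l : List (Fin δ)}, i ∉ l →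
      contractLeft (Q := (0 : QuadraticForm Λ W)) (γ i) (mon (l.map β)) = 0 := by
  intro l
  induction l with
  | nil => intro _; simp [mon]
  | cons a l ih =>
      intro hi
      have hia : i ≠ a := fun h => hi (h ▸ List.mem_cons_self (a := a) (l := l))
      have hil : i ∉ l := fun h => hi (List.mem_cons_of_mem a h)
      rw [List.map_cons, mon_cons, contractLeft_ι_mul, hγβ, if_neg hia, zero_smul,
        ih hil, mul_zero, sub_zero]

lemma contract_mon_of_mem (β : Fin δ → W)
    (hγβ : ∀ i j, γ i (β j) = if i = j then 1 else 0) {i : Fin δ} :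
    ∀ {l : List (Fin δ)}, l.Nodup → i ∈ l →
      ∃ k : ℕ, contractLeft (Q := (0 : QuadraticForm Λ W)) (γ i) (mon (l.map β))
        = ((-1 : Λ))^k • mon ((l.erase i).map β) := by
  intro l
  induction l with
  | nil => intro _ h; simp at h
  | cons a l ih =>
      intro hnd hi
      rcases eq_or_ne a i with rfl | hne
      · refine ⟨0, ?_⟩
        have hil : a ∉ l := (List.nodup_cons.mp hnd).1
        rw [List.map_cons, mon_cons, contractLeft_ι_mul, hγβ, if_pos rfl,
          contract_mon_of_not_mem γ β hγβ hil, mul_zero, sub_zero, one_smul,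
          List.erase_cons_head, pow_zero, one_smul]
      · have hil : i ∈ l := by
          rcases List.mem_cons.mp hi with h | h
          · exact absurd h.symm hne
          · exact h
        obtain ⟨k, hk⟩ := ih (List.nodup_cons.mp hnd).2 hil
        refine ⟨k + 1, ?_⟩
        have herase : (a :: l).erase i = a :: l.erase i := by
          rw [List.erase_cons_tail]
          simp [hne]
        rw [List.map_cons, mon_cons, contractLeft_ι_mul, hγβ, if_neg hne.symm, zero_smul,
          hk, zero_sub, mul_smul_comm, herase, List.map_cons, mon_cons, ← neg_smul]
        congr 1
        rw [pow_succ]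
        ring

/-- Iterated contraction along a list of indices. -/
def fullC (s : List (Fin δ)) : ExteriorAlgebra Λ W →ₗ[Λ] ExteriorAlgebra Λ W :=
  s.foldr (fun i f => (contractLeft (Q := (0 : QuadraticForm Λ W)) (γ i)).comp f) LinearMap.id

@[simp] lemma fullC_nil (x : ExteriorAlgebra Λ W) : fullC γ [] x = x := rfl

@[simp] lemma fullC_cons (i : Fin δ) (s : List (Fin δ)) (x : ExteriorAlgebra Λ W) :
    fullC γ (i :: s) x
      = contractLeft (Q := (0 : QuadraticForm Λ W)) (γ i) (fullC γ s x) := rfl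

lemma cList_erase (T : Finset (Fin δ)) (i : Fin δ) :
    (cList T).erase i = cList (T.erase i) := by
  rw [(nodup_cList T).erase_eq_filter, cList, cList, List.filter_filter]
  apply List.filter_congr
  intro x hx
  simp only [Finset.mem_erase]
  rcases eq_or_ne x i with rfl | hxi
  · simp
  · simp [hxi]

lemma fullC_cMon_of_subset (β : Fin δ → W)
    (hγβ : ∀ i j, γ i (β j) = if i = j then 1 else 0) :
    ∀ (s : List (Fin δ)), s.Nodup → ∀ T : Finset (Fin δ), (∀ x ∈ s, x ∈ T) →
    ∃ k : ℕ, fullC γ s (cMon β T) = ((-1 : Λ))^k • cMon β (T \ s.toFinset) := by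
  intro s
  induction s with
  | nil =>
      intro _ T _
      exact ⟨0, by simp⟩
  | cons i s ih =>
      intro hnd T hsub
      obtain ⟨k, hk⟩ := ih (List.nodup_cons.mp hnd).2 T
        (fun x hx => hsub x (List.mem_cons_of_mem i hx))
      have his : i ∉ s := (List.nodup_cons.mp hnd).1
      have hiT' : i ∈ T \ s.toFinset := by
        rw [Finset.mem_sdiff]
        exact ⟨hsub i (List.mem_cons_self (a := i) (l := s)), by simpa using his⟩
      obtain ⟨k', hk'⟩ := contract_mon_of_mem γ β hγβ (nodup_cList _)
        (mem_cList.mpr hiT')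
      refine ⟨k + k', ?_⟩
      have hset : (T \ s.toFinset).erase i = T \ (i :: s).toFinset := by
        ext x
        simp only [Finset.mem_erase, Finset.mem_sdiff, List.toFinset_cons,
          Finset.mem_insert]
        tauto
      rw [fullC_cons, hk, map_smul, cMon, hk', cList_erase, hset, smul_smul, ← pow_add]
      rfl

lemma fullC_cMon_of_not_subset (β : Fin δ → W)
    (hγβ : ∀ i j, γ i (β j) = if i = j then 1 else 0) :
    ∀ (s : List (Fin δ)), s.Nodup → ∀ T : Finset (Fin δ), ¬ (∀ x ∈ s, x ∈ T) →
    fullC γ s (cMon β T) = 0 := by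
  intro s
  induction s with
  | nil => intro _ T h; exact absurd (by simp) h
  | cons i s ih =>
      intro hnd T h
      by_cases hsub : ∀ x ∈ s, x ∈ T
      · have hiT : i ∉ T := by
          intro hiT
          exact h (fun x hx => by
            rcases List.mem_cons.mp hx with rfl | hx
            · exact hiT
            · exact hsub x hx)
        obtain ⟨k, hk⟩ := fullC_cMon_of_subset γ β hγβ s (List.nodup_cons.mp hnd).2 T hsub
        have hiT' : i ∉ cList (T \ s.toFinset) := by
          rw [mem_cList, Finset.mem_sdiff]
          intro hc
          exact hiT hc.1
        rw [fullC_cons, hk, map_smul, cMon, contract_mon_of_not_mem γ β hγβ hiT',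
          smul_zero]
      · rw [fullC_cons, ih (List.nodup_cons.mp hnd).2 T hsub, map_zero]

lemma algebraMapInv_mon_ne_nil {l : List W} (h : l ≠ []) :
    algebraMapInv (mon (Λ := Λ) l) = 0 := by
  cases l with
  | nil => exact absurd rfl h
  | cons w l =>
      rw [mon_cons, map_mul]
      have hw : algebraMapInv (ι Λ w) = 0 := by
        simp [ExteriorAlgebra.algebraMapInv]
      rw [hw, zero_mul]

lemma cList_ne_nil {T : Finset (Fin δ)} (h : T.Nonempty) : cList T ≠ [] := by
  obtain ⟨i, hi⟩ := h
  exact List.ne_nil_of_mem (mem_cList.mpr hi)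

lemma linearIndependent_cMon (β : Fin δ → W)
    (hγβ : ∀ i j, γ i (β j) = if i = j then 1 else 0) :
    LinearIndependent Λ (cMon (Λ := Λ) β) := by
  rw [Fintype.linearIndependent_iff]
  intro g hg S
  set f : ExteriorAlgebra Λ W →ₗ[Λ] Λ :=
    (algebraMapInv.toLinearMap).comp (fullC γ (cList S)) with hfdef
  have hf0 : ∀ T : Finset (Fin δ), T ≠ S → f (cMon β T) = 0 := by
    intro T hT
    by_cases hsub : ∀ x ∈ cList S, x ∈ T
    · obtain ⟨k, hk⟩ := fullC_cMon_of_subset γ β hγβ (cList S) (nodup_cList S) T hsub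
      have hST : S ⊆ T := fun x hx => hsub x (mem_cList.mpr hx)
      have hne : (T \ S).Nonempty := by
        rw [Finset.sdiff_nonempty]
        intro hTS
        exact hT (Finset.Subset.antisymm hTS hST)
      rw [hfdef, LinearMap.comp_apply, hk, map_smul, toFinset_cList, cMon, AlgHom.toLinearMap_apply,
        algebraMapInv_mon_ne_nil (by simpa using cList_ne_nil hne), smul_zero]
    · rw [hfdef, LinearMap.comp_apply,
        fullC_cMon_of_not_subset γ β hγβ (cList S) (nodup_cList S) T hsub, map_zero]
  obtain ⟨k, hk⟩ := fullC_cMon_of_subset γ β hγβ (cList S) (nodup_cList S) S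
    (fun x hx => mem_cList.mp hx)
  have hfS : f (cMon β S) = ((-1 : Λ))^k := by
    rw [hfdef, LinearMap.comp_apply, hk, map_smul, toFinset_cList, Finset.sdiff_self,
      cMon, cList_empty, List.map_nil, mon_nil, AlgHom.toLinearMap_apply, map_one, smul_eq_mul, mul_one]
  have := congrArg f hg
  rw [map_sum, map_zero] at this
  simp only [map_smul] at this
  rw [Finset.sum_eq_single S (fun T _ hT => by rw [hf0 T hT, smul_zero])
    (fun h => absurd (Finset.mem_univ S) h)] at this
  rw [hfS, smul_eq_mul] at this
  have h2 : g S * ((-1 : Λ)^k * (-1 : Λ)^k) = 0 := by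
    rw [← mul_assoc, this, zero_mul]
  rwa [← pow_add, ← two_mul, pow_mul, neg_one_sq, one_pow, mul_one] at h2

/-- The basis of the exterior algebra given by canonical monomials in a basis. -/
def monBasis (β : Module.Basis (Fin δ) Λ W)
    (hγβ : ∀ i j, γ i (β j) = if i = j then 1 else 0) :
    Module.Basis (Finset (Fin δ)) Λ (ExteriorAlgebra Λ W) :=
  Module.Basis.mk (linearIndependent_cMon γ β hγβ) (span_cMon β).ge

@[simp] lemma monBasis_apply (β : Module.Basis (Fin δ) Λ W)
    (hγβ : ∀ i j, γ i (β j) = if i = j then 1 else 0) (S : Finset (Fin δ)) :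
    monBasis γ β hγβ S = cMon β S :=
  Module.Basis.mk_apply _ _ _

end Contraction

end SpectralHeckeAux

set_option maxHeartbeats 2000000 in
set_option synthInstance.maxHeartbeats 200000 in
open SpectralHeckeAux in
/-- let `Λ` be a commutative ring, `V` a finite free `Λ`-module with dual
`V*`, and `M` a `Λ`-module with actions `ρ` of `⋀*(V)` and `ρ'` of `⋀*(V*)` satisfying the
Clifford-type compatibility `v·v*·m + v*·v·m = ⟨v, v*⟩·m`. If `M` is free of rank one over
`⋀*(V*)` with generator `m₀` annihilated by `V`, then `M` is free of rank one over `⋀*(V)`,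
generated by `(v*₁ ∧ … ∧ v*_δ)·m₀` for any basis `v*₁, …, v*_δ` of `V*`. -/
theorem spectral_hecke_stmt15 (Λ : Type) [CommRing Λ]
    (V : Type) [AddCommGroup V] [Module Λ V] [Module.Free Λ V] [Module.Finite Λ V]
    (δ : ℕ) (hδ : Module.finrank Λ V = δ)
    (M : Type) [AddCommGroup M] [Module Λ M]
    (ρ : ExteriorAlgebra Λ V →ₐ[Λ] Module.End Λ M)
    (ρ' : ExteriorAlgebra Λ (Module.Dual Λ V) →ₐ[Λ] Module.End Λ M)
    (hcompat : ∀ (v : V) (φ : Module.Dual Λ V) (x : M),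
      ρ (ExteriorAlgebra.ι Λ v) (ρ' (ExteriorAlgebra.ι Λ φ) x) +
        ρ' (ExteriorAlgebra.ι Λ φ) (ρ (ExteriorAlgebra.ι Λ v) x) = φ v • x)
    (m₀ : M)
    (hgen : Function.Bijective
      (fun r : ExteriorAlgebra Λ (Module.Dual Λ V) => ρ' r m₀))
    (hann : ∀ v : V, ρ (ExteriorAlgebra.ι Λ v) m₀ = 0) :
    ∀ b : Module.Basis (Fin δ) Λ (Module.Dual Λ V),
      Function.Bijective
        (fun r : ExteriorAlgebra Λ V =>
          ρ r (ρ' ((List.ofFn fun i : Fin δ => ExteriorAlgebra.ι Λ (b i)).prod) m₀)) := by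
  intro b
  classical
  set e : Module.Basis (Fin δ) Λ V := b.dualBasis.map (Module.evalEquiv Λ V).symm with he
  have pair1 : ∀ i j, b i (e j) = if i = j then 1 else 0 := by
    intro i j
    have hej : e j = (Module.evalEquiv Λ V).symm (b.dualBasis j) := by
      rw [he, Module.Basis.map_apply]
    rw [hej, Module.apply_evalEquiv_symm_apply, b.dualBasis_apply_self]
  set γ' : Fin δ → Module.Dual Λ (Module.Dual Λ V) :=
    fun i => Module.Dual.eval Λ V (e i) with hγ'
  have pair2 : ∀ i j, γ' i (b j) = if i = j then 1 else 0 := by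
    intro i j
    rw [hγ']
    show b j (e i) = _
    rw [pair1 j i]
    by_cases h : i = j
    · subst h; simp
    · rw [if_neg h, if_neg (fun hh => h hh.symm)]
  -- transfer of the action on monomials
  have Tmon : ∀ (v : V) (L : List (Module.Dual Λ V)),
      ρ (ExteriorAlgebra.ι Λ v) (ρ' (mon L) m₀)
        = ρ' (CliffordAlgebra.contractLeft
            (Q := (0 : QuadraticForm Λ (Module.Dual Λ V)))
            (Module.Dual.eval Λ V v) (mon L)) m₀ := by
    intro v L
    induction L with
    | nil =>
        rw [mon_nil, map_one, Module.End.one_apply, hann v,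
          CliffordAlgebra.contractLeft_one, map_zero, LinearMap.zero_apply]
    | cons φ L ih =>
        rw [mon_cons, map_mul, Module.End.mul_apply]
        have h1 : ρ (ExteriorAlgebra.ι Λ v) (ρ' (ExteriorAlgebra.ι Λ φ) (ρ' (mon L) m₀))
            = φ v • (ρ' (mon L) m₀)
              - ρ' (ExteriorAlgebra.ι Λ φ) (ρ (ExteriorAlgebra.ι Λ v) (ρ' (mon L) m₀)) :=
          eq_sub_of_add_eq (hcompat v φ (ρ' (mon L) m₀))
        rw [h1, ih, CliffordAlgebra.contractLeft_ι_mul, map_sub, map_smul,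
          LinearMap.sub_apply, LinearMap.smul_apply, map_mul, Module.End.mul_apply]
        rfl
  have T1 : ∀ (v : V) (s : ExteriorAlgebra Λ (Module.Dual Λ V)),
      ρ (ExteriorAlgebra.ι Λ v) (ρ' s m₀)
        = ρ' (CliffordAlgebra.contractLeft
            (Q := (0 : QuadraticForm Λ (Module.Dual Λ V)))
            (Module.Dual.eval Λ V v) s) m₀ := by
    intro v s
    have hs : s ∈ Submodule.span Λ
        (Set.range (mon : List (Module.Dual Λ V) → ExteriorAlgebra Λ (Module.Dual Λ V))) := by
      rw [span_mon]; trivial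
    induction hs using Submodule.span_induction with
    | mem x hx => obtain ⟨L, rfl⟩ := hx; exact Tmon v L
    | zero =>
        simp only [map_zero, LinearMap.zero_apply]
    | add x y _ _ hx hy =>
        rw [map_add, LinearMap.add_apply, map_add, hx, hy, map_add, map_add,
          LinearMap.add_apply]
    | smul r x _ hx =>
        rw [map_smul, LinearMap.smul_apply, map_smul, hx, map_smul, map_smul,
          LinearMap.smul_apply]
  have T2 : ∀ (s : List (Fin δ)) (x : ExteriorAlgebra Λ (Module.Dual Λ V)),
      ρ (mon (s.map e)) (ρ' x m₀) = ρ' (fullC γ' s x) m₀ := by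
    intro s
    induction s with
    | nil => intro x; rw [List.map_nil, mon_nil, map_one, Module.End.one_apply, fullC_nil]
    | cons i s ih =>
        intro x
        rw [List.map_cons, mon_cons, map_mul, Module.End.mul_apply, ih, T1, fullC_cons]
  set x0 : M := ρ' ((List.ofFn fun i : Fin δ => ExteriorAlgebra.ι Λ (b i)).prod) m₀ with hx0def
  have hx0 : x0 = ρ' (cMon (⇑b) Finset.univ) m₀ := by
    rw [hx0def]
    congr 1
    have hcl : cList (Finset.univ : Finset (Fin δ)) = List.finRange δ := by
      rw [cList, List.filter_eq_self]
      intro a _; simp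
    rw [cMon, hcl, List.ofFn_eq_map, mon, List.map_map]
    rfl
  -- the linear map in question
  set c : ExteriorAlgebra Λ V →ₗ[Λ] M :=
    { toFun := fun r => ρ r x0
      map_add' := fun x y => by
        show ρ (x + y) x0 = ρ x x0 + ρ y x0
        rw [map_add]; rfl
      map_smul' := fun a x => by
        show ρ (a • x) x0 = a • ρ x x0
        rw [map_smul]; rfl } with hcdef
  -- bases
  set BV : Module.Basis (Finset (Fin δ)) Λ (ExteriorAlgebra Λ V) :=
    monBasis (fun i => b i) e pair1 with hBV
  set ρ'm : ExteriorAlgebra Λ (Module.Dual Λ V) →ₗ[Λ] M :=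
    { toFun := fun r => ρ' r m₀
      map_add' := fun x y => by
        show ρ' (x + y) m₀ = ρ' x m₀ + ρ' y m₀
        rw [map_add]; rfl
      map_smul' := fun a x => by
        show ρ' (a • x) m₀ = a • ρ' x m₀
        rw [map_smul]; rfl } with hρ'm
  set EM : ExteriorAlgebra Λ (Module.Dual Λ V) ≃ₗ[Λ] M :=
    LinearEquiv.ofBijective ρ'm hgen with hEM
  set BM : Module.Basis (Finset (Fin δ)) Λ M := (monBasis γ' b pair2).map EM with hBM
  have key : ∀ S : Finset (Fin δ), ∃ k : ℕ,
      c (BV S) = ((-1 : Λ))^k • BM Sᶜ := by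
    intro S
    obtain ⟨k, hk⟩ := fullC_cMon_of_subset γ' (⇑b) pair2 (cList S) (nodup_cList S)
      Finset.univ (fun x _ => Finset.mem_univ x)
    refine ⟨k, ?_⟩
    have hBVS : BV S = cMon (⇑e) S := by rw [hBV, monBasis_apply]
    have hBMS : BM Sᶜ = ρ' (cMon (⇑b) Sᶜ) m₀ := by
      rw [hBM, Module.Basis.map_apply, monBasis_apply]; rfl
    show ρ (BV S) x0 = _
    rw [hBVS, hx0, cMon, T2 (cList S) (cMon (⇑b) Finset.univ), hk, toFinset_cList,
      map_smul, LinearMap.smul_apply, hBMS, Finset.compl_eq_univ_sdiff]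
  choose k hkey using key
  set cEquiv : Equiv.Perm (Finset (Fin δ)) :=
    ⟨fun S => Sᶜ, fun S => Sᶜ, fun S => compl_compl S, fun S => compl_compl S⟩ with hcE
  set ε : Finset (Fin δ) → Λˣ := fun S => (-1 : Λˣ)^(k S) with hε
  set BM' : Module.Basis (Finset (Fin δ)) Λ M := (BM.reindex cEquiv).unitsSMul ε with hBM'
  have hBM'app : ∀ S, BM' S = ((-1 : Λ))^(k S) • BM Sᶜ := by
    intro S
    rw [hBM', Module.Basis.unitsSMul_apply, Module.Basis.reindex_apply]
    have h1 : cEquiv.symm S = Sᶜ := rfl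
    rw [h1, hε, Units.smul_def]
    congr 1
  have hc : c = ((BV.equiv BM' (Equiv.refl _)) :
      ExteriorAlgebra Λ V →ₗ[Λ] M) := by
    apply BV.ext
    intro S
    rw [LinearEquiv.coe_coe, Module.Basis.equiv_apply, Equiv.refl_apply, hkey S, hBM'app S]
  have hfun : (fun r : ExteriorAlgebra Λ V => ρ r x0)
      = ⇑(BV.equiv BM' (Equiv.refl _)) := by
    funext r
    exact (DFunLike.congr_fun hc r : _)
  rw [hx0def] at hfun
  rw [hfun]
  exact (BV.equiv BM' (Equiv.refl _)).bijective


end
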